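/- Let f : [a,b] → E be continuous with ‖f(τ)‖_E ≤ M for all τ ∈ [a,b], where M > 0, and define F(t) := (1/Γ(α)) ∫_a^t (t-τ)^{α-1} f(τ) dτ. Then for all t, s ∈ [a,b], ‖F(t) - F(s)‖_E ≤ (2M/Γ(α+1))·|t-s|^α; that is, F is Hölder continuous of exponent α with constant 2M/Γ(α+1). -/

import Mathlib

open MeasureTheory Set intervalIntegral NNReal Interval

lemma aux_rpow_sub_le {x y p : ℝ} (hy : 0 ≤ y) (hxy : y ≤ x) (hp0 : 0 ≤ p) (hp1 : p ≤ 1) :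
    x ^ p ≤ (x - y) ^ p + y ^ p := by
  have h := NNReal.rpow_add_le_add_rpow ((x - y).toNNReal) (y.toNNReal) hp0 hp1
  rw [← Real.toNNReal_add (by linarith) hy, sub_add_cancel] at h
  have h2 : ((x.toNNReal ^ p : ℝ≥0) : ℝ) ≤ (((x - y).toNNReal ^ p : ℝ≥0) : ℝ) + (((y.toNNReal) ^ p : ℝ≥0) : ℝ) := by
    exact_mod_cast h
  rwa [NNReal.coe_rpow, NNReal.coe_rpow, NNReal.coe_rpow,
    Real.coe_toNNReal _ (by linarith), Real.coe_toNNReal _ (by linarith),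
    Real.coe_toNNReal _ hy] at h2

theorem fractional_integral_holder
    {E : Type*} [NormedAddCommGroup E] [NormedSpace ℝ E] [CompleteSpace E]
    (a b α M : ℝ) (hab : a < b) (hα0 : 0 < α) (hα1 : α < 1) (hM : 0 < M)
    (f : ℝ → E) (hf : ContinuousOn f (Set.Icc a b))
    (hfM : ∀ τ ∈ Set.Icc a b, ‖f τ‖ ≤ M)
    (F : ℝ → E)
    (hF : ∀ t, F t = (Real.Gamma α)⁻¹ • ∫ τ in a..t, ((t - τ) ^ (α - 1) : ℝ) • f τ) :
    ∀ t ∈ Set.Icc a b, ∀ s ∈ Set.Icc a b,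
      ‖F t - F s‖ ≤ 2 * M / Real.Gamma (α + 1) * |t - s| ^ α := by
  have hΓ : 0 < Real.Gamma α := Real.Gamma_pos_of_pos hα0
  have hΓ1 : Real.Gamma (α + 1) = α * Real.Gamma α := Real.Gamma_add_one (ne_of_gt hα0)
  have hm1 : (-1 : ℝ) < α - 1 := by linarith
  -- scalar kernel integrability
  have hsc : ∀ (u c d : ℝ), IntervalIntegrable (fun τ => (u - τ) ^ (α - 1)) volume c d := by
    intro u c d
    have h := (intervalIntegrable_rpow' hm1 (a := u - c) (b := u - d)).comp_sub_left u
    simpa using h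
  have hfmeas : AEStronglyMeasurable f (volume.restrict (Icc a b)) :=
    hf.aestronglyMeasurable measurableSet_Icc
  -- vector integrand integrability
  have hvi : ∀ (u c d : ℝ), Ι c d ⊆ Icc a b →
      IntervalIntegrable (fun τ => ((u - τ) ^ (α - 1) : ℝ) • f τ) volume c d := by
    intro u c d hsub
    apply IntervalIntegrable.mono_fun' (g := fun τ => M * |(u - τ) ^ (α - 1)|)
    · simpa [Real.norm_eq_abs] using ((hsc u c d).norm.const_mul M)
    · exact ((hsc u c d).def'.aestronglyMeasurable).smul
        (hfmeas.mono_measure (Measure.restrict_mono hsub le_rfl))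
    · filter_upwards [ae_restrict_mem measurableSet_uIoc] with τ hτ
      rw [norm_smul, Real.norm_eq_abs]
      calc |(u - τ) ^ (α - 1)| * ‖f τ‖ ≤ |(u - τ) ^ (α - 1)| * M :=
            mul_le_mul_of_nonneg_left (hfM τ (hsub hτ)) (abs_nonneg _)
        _ = M * |(u - τ) ^ (α - 1)| := mul_comm _ _
  -- kernel integral values
  have hval : ∀ (u c d : ℝ), (∫ τ in c..d, (u - τ) ^ (α - 1)) =
      ((u - c) ^ α - (u - d) ^ α) / α := by
    intro u c d
    rw [intervalIntegral.integral_comp_sub_left (fun x => x ^ (α - 1)) u,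
      integral_rpow (Or.inl hm1)]
    have hα' : α - 1 + 1 = α := by ring
    rw [hα']
  have key : ∀ s t : ℝ, a ≤ s → s ≤ t → t ≤ b →
      ‖F t - F s‖ ≤ 2 * M / Real.Gamma (α + 1) * (t - s) ^ α := by
    intro s t has hst htb
    rcases eq_or_lt_of_le hst with rfl | hst'
    · simp [Real.zero_rpow (ne_of_gt hα0)]
    have hsub1 : Ι a s ⊆ Icc a b := by
      rw [uIoc_of_le has]
      exact fun x hx => ⟨le_of_lt hx.1, hx.2.trans (by linarith)⟩
    have hsub2 : Ι s t ⊆ Icc a b := by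
      rw [uIoc_of_le hst]
      exact fun x hx => ⟨has.trans (le_of_lt hx.1), hx.2.trans htb⟩
    have hi_as := hvi t a s hsub1
    have hi_st := hvi t s t hsub2
    have hi_s_as := hvi s a s hsub1
    set I1 := ∫ τ in a..s, (((t - τ) ^ (α - 1) - (s - τ) ^ (α - 1)) : ℝ) • f τ with hI1def
    set I2 := ∫ τ in s..t, ((t - τ) ^ (α - 1) : ℝ) • f τ with hI2def
    have hdiff : F t - F s = (Real.Gamma α)⁻¹ • (I1 + I2) := by
      rw [hF t, hF s, ← smul_sub]
      congr 1
      rw [← intervalIntegral.integral_add_adjacent_intervals hi_as hi_st]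
      have h1 : I1 = (∫ τ in a..s, ((t - τ) ^ (α - 1) : ℝ) • f τ)
          - ∫ τ in a..s, ((s - τ) ^ (α - 1) : ℝ) • f τ := by
        rw [hI1def, ← intervalIntegral.integral_sub hi_as hi_s_as]
        simp only [sub_smul]
      rw [h1]; abel
    -- bound on I2
    have hI2 : ‖I2‖ ≤ M * (t - s) ^ α / α := by
      have hb := intervalIntegral.norm_integral_le_abs_of_norm_le (μ := volume)
        (f := fun τ => ((t - τ) ^ (α - 1) : ℝ) • f τ)
        (g := fun τ => M * (t - τ) ^ (α - 1)) (a := s) (b := t)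
        ?_ ((hsc t s t).const_mul M)
      · refine hb.trans_eq ?_
        rw [intervalIntegral.integral_const_mul, hval t s t, sub_self,
          Real.zero_rpow (ne_of_gt hα0), sub_zero]
        have h0 : (0:ℝ) ≤ (t - s) ^ α := Real.rpow_nonneg (by linarith) _
        rw [abs_of_nonneg (by positivity), mul_div_assoc]
      · filter_upwards [ae_restrict_mem measurableSet_uIoc] with τ hτ
        have hτ' := hτ
        rw [uIoc_of_le hst] at hτ'
        have h0 : (0:ℝ) ≤ t - τ := by linarith [hτ'.2]
        rw [norm_smul, Real.norm_eq_abs, abs_of_nonneg (Real.rpow_nonneg h0 _)]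
        calc (t - τ) ^ (α - 1) * ‖f τ‖ ≤ (t - τ) ^ (α - 1) * M :=
              mul_le_mul_of_nonneg_left (hfM τ (hsub2 hτ)) (Real.rpow_nonneg h0 _)
          _ = M * (t - τ) ^ (α - 1) := mul_comm _ _
    -- bound on I1
    have hI1 : ‖I1‖ ≤ M * (t - s) ^ α / α := by
      have hne : ∀ᵐ τ : ℝ, τ ≠ s := by
        rw [ae_iff]
        have : {τ : ℝ | ¬τ ≠ s} = {s} := by ext x; simp
        rw [this]
        exact Real.volume_singleton
      have hb := intervalIntegral.norm_integral_le_abs_of_norm_le (μ := volume)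
        (f := fun τ => (((t - τ) ^ (α - 1) - (s - τ) ^ (α - 1)) : ℝ) • f τ)
        (g := fun τ => M * ((s - τ) ^ (α - 1) - (t - τ) ^ (α - 1))) (a := a) (b := s)
        ?_ (((hsc s a s).sub (hsc t a s)).const_mul M)
      · refine hb.trans ?_
        rw [intervalIntegral.integral_const_mul, intervalIntegral.integral_sub
          (hsc s a s) (hsc t a s), hval s a s, hval t a s, sub_self,
          Real.zero_rpow (ne_of_gt hα0)]
        set A : ℝ := (s - a) ^ α + (t - s) ^ α - (t - a) ^ α with hA
        have h0A : 0 ≤ A := by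
          have h := aux_rpow_sub_le (x := t - a) (y := s - a) (by linarith) (by linarith)
            (le_of_lt hα0) (le_of_lt hα1)
          have hxy : t - a - (s - a) = t - s := by ring
          rw [hxy] at h
          rw [hA]; linarith
        have hAle : A ≤ (t - s) ^ α := by
          have h := Real.rpow_le_rpow (by linarith : (0:ℝ) ≤ s - a)
            (by linarith : s - a ≤ t - a) (le_of_lt hα0)
          rw [hA]; linarith
        have heq : M * (((s - a) ^ α - 0) / α - ((t - a) ^ α - (t - s) ^ α) / α)
            = M * A / α := by
          rw [hA]; ring
        rw [heq, abs_of_nonneg (by positivity)]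
        exact div_le_div_of_nonneg_right (mul_le_mul_of_nonneg_left hAle hM.le) hα0.le
      · filter_upwards [ae_restrict_mem measurableSet_uIoc, ae_restrict_of_ae hne]
          with τ hτ hτs
        rw [uIoc_of_le has] at hτ
        have hτs' : τ < s := lt_of_le_of_ne hτ.2 hτs
        have h1 : (t - τ) ^ (α - 1) ≤ (s - τ) ^ (α - 1) :=
          Real.rpow_le_rpow_of_nonpos (by linarith) (by linarith) (by linarith)
        rw [norm_smul, Real.norm_eq_abs, abs_of_nonpos (by linarith), neg_sub]
        have hmem : τ ∈ Icc a b := ⟨le_of_lt hτ.1, by linarith [hτ.2]⟩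
        calc ((s - τ) ^ (α - 1) - (t - τ) ^ (α - 1)) * ‖f τ‖
            ≤ ((s - τ) ^ (α - 1) - (t - τ) ^ (α - 1)) * M :=
              mul_le_mul_of_nonneg_left (hfM τ hmem) (by linarith)
          _ = M * ((s - τ) ^ (α - 1) - (t - τ) ^ (α - 1)) := mul_comm _ _
    -- combine
    rw [hdiff, norm_smul, Real.norm_eq_abs, abs_of_pos (inv_pos.2 hΓ)]
    calc (Real.Gamma α)⁻¹ * ‖I1 + I2‖
        ≤ (Real.Gamma α)⁻¹ * (M * (t - s) ^ α / α + M * (t - s) ^ α / α) := by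
          apply mul_le_mul_of_nonneg_left ((norm_add_le _ _).trans (add_le_add hI1 hI2))
            (le_of_lt (inv_pos.2 hΓ))
      _ = 2 * M / Real.Gamma (α + 1) * (t - s) ^ α := by
          rw [hΓ1]; field_simp; ring
  intro t ht s hs
  rcases le_total s t with h | h
  · have := key s t hs.1 h ht.2
    rwa [abs_of_nonneg (by linarith)]
  · have := key t s ht.1 h hs.2
    rwa [norm_sub_rev, abs_of_nonpos (by linarith), neg_sub]
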